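/- (Fried–MacRae) Let K be a field and f, g, a, b ∈ K[x] nonconstant polynomials. Then f(x) - g(y) divides a(x) - b(y) in K[x,y] if and only if there exists a polynomial T ∈ K[x] such that T(f(x)) = a(x) and T(g(y)) = b(y). -/

import Mathlib

section FM
open Polynomial
variable {K : Type*} [Field K]

-- degree and leading coeff of f.map ρ - C s
lemma fm_deg_aux {S : Type*} [CommRing S] [Nontrivial S] (ρ : K →+* S) (f : K[X])
    (hf : 0 < f.natDegree) (s : S) :
    (f.map ρ - C s).natDegree = f.natDegree ∧
    (f.map ρ - C s).leadingCoeff = ρ f.leadingCoeff := by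
  have hmap : (f.map ρ).natDegree = f.natDegree := natDegree_map ρ
  have hlt : (C s : S[X]).natDegree < (f.map ρ).natDegree := by
    rw [hmap]; simpa using hf
  have hdeg : (f.map ρ - C s).natDegree = f.natDegree := by
    rw [natDegree_sub_eq_left_of_natDegree_lt hlt, hmap]
  refine ⟨hdeg, ?_⟩
  rw [leadingCoeff, hdeg, coeff_sub, coeff_map, coeff_C,
    if_neg (by omega : ¬f.natDegree = 0), sub_zero, leadingCoeff]

lemma fm_key (f g a b : K[X]) (hf : 0 < f.natDegree) (hg : 0 < g.natDegree)
    (h : (f.map (C : K →+* K[X]) - C g) ∣ (a.map (C : K →+* K[X]) - C b)) :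
    ∃ T : K[X], T.comp f = a ∧ T.comp g = b := by
  have hc0 : f.leadingCoeff ≠ 0 := leadingCoeff_ne_zero.mpr
    (fun h0 => by simp [h0] at hf)
  -- Φ = f(X) - t  in  K[t][X]
  set Φ : Polynomial (K[X]) := f.map (C : K →+* K[X]) - C X with hΦ
  obtain ⟨hΦdeg, hΦlc⟩ := fm_deg_aux (C : K →+* K[X]) f hf X
  rw [← hΦ] at hΦdeg hΦlc
  have hΦ0 : Φ ≠ 0 := fun h0 => by
    rw [h0, leadingCoeff_zero] at hΦlc
    exact hc0 (by simpa using hΦlc.symm)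
  -- monic scaling
  set M : Polynomial (K[X]) := C (C f.leadingCoeff⁻¹) * Φ with hM
  have hMmonic : M.Monic := by
    have : M.leadingCoeff = 1 := by
      rw [hM, leadingCoeff_mul, leadingCoeff_C, hΦlc, ← map_mul,
        inv_mul_cancel₀ hc0, map_one]
    exact this
  have hMdeg : M.natDegree = f.natDegree := by
    rw [hM, natDegree_mul (by simp [hc0]) hΦ0, natDegree_C, zero_add, hΦdeg]
  -- division with remainder
  obtain ⟨Q, R, hdiv, hRdeg⟩ : ∃ Q R : Polynomial (K[X]),
      a.map (C : K →+* K[X]) = Φ * Q + R ∧ R.natDegree < f.natDegree := by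
    refine ⟨C (C f.leadingCoeff⁻¹) * (a.map (C : K →+* K[X]) /ₘ M),
      a.map (C : K →+* K[X]) %ₘ M, ?_, ?_⟩
    · conv_lhs => rw [← modByMonic_add_div (a.map (C : K →+* K[X])) M]
      rw [hM]; ring
    · rcases eq_or_ne (a.map (C : K →+* K[X]) %ₘ M) 0 with h0 | h0
      · simpa [h0] using hf
      · have := natDegree_lt_natDegree h0
          (degree_modByMonic_lt (a.map (C : K →+* K[X])) hMmonic)
        omega
  -- substitute t := g
  set σ : K[X] →+* K[X] := eval₂RingHom (C : K →+* K[X]) g with hσ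
  have hσC : σ.comp (C : K →+* K[X]) = C := by ext k; simp [hσ]
  have hσcomp : ∀ p : K[X], σ p = p.comp g := fun p => by simp [hσ, comp, eval₂RingHom]
  set ψ : Polynomial (K[X]) →+* Polynomial (K[X]) := mapRingHom σ with hψ
  have hψmapC : ∀ p : K[X], ψ (p.map (C : K →+* K[X])) = p.map (C : K →+* K[X]) := by
    intro p; rw [hψ, coe_mapRingHom, map_map, hσC]
  have hψΦ : ψ Φ = f.map (C : K →+* K[X]) - C g := by
    rw [hΦ, map_sub, hψmapC, hψ, coe_mapRingHom, map_C]
    simp [hσ]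
  have hdiv2 : a.map (C : K →+* K[X]) = (f.map (C : K →+* K[X]) - C g) * ψ Q + ψ R := by
    conv_lhs => rw [← hψmapC a, hdiv]
    rw [map_add, map_mul, hψΦ]
  -- F divides ψ R - C b
  have h2 : (f.map (C : K →+* K[X]) - C g) ∣ (ψ R - C b) := by
    obtain ⟨w, hw⟩ := h
    exact ⟨w - ψ Q, by linear_combination hw - hdiv2⟩
  obtain ⟨hFdeg, hFlc⟩ := fm_deg_aux (C : K →+* K[X]) f hf g
  have hF0 : f.map (C : K →+* K[X]) - C g ≠ 0 := fun h0 => by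
    rw [h0, leadingCoeff_zero] at hFlc
    exact hc0 (by simpa using hFlc.symm)
  -- degree argument: ψ R = C b
  have hψRCb : ψ R = C b := by
    by_contra hne
    obtain ⟨w, hw⟩ := h2
    have hw0 : w ≠ 0 := by rintro rfl; simp at hw; exact hne (sub_eq_zero.mp hw)
    have hdegz : (ψ R - C b).natDegree = f.natDegree + w.natDegree := by
      rw [hw, natDegree_mul hF0 hw0, hFdeg]
    have hle : (ψ R - C b).natDegree < f.natDegree := by
      have h1 : (ψ R).natDegree ≤ R.natDegree := natDegree_map_le
      have h2' : (ψ R - C b).natDegree ≤ max (ψ R).natDegree (C b : Polynomial (K[X])).natDegree :=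
        natDegree_sub_le _ _
      have h3 : (C b : Polynomial (K[X])).natDegree = 0 := natDegree_C b
      omega
    omega
  -- coefficients of R
  have hcoeff : ∀ i, (R.coeff i).comp g = (C b : Polynomial (K[X])).coeff i := by
    intro i
    rw [← hψRCb, hψ, coe_mapRingHom, coeff_map, hσcomp]
  have hTg : (R.coeff 0).comp g = b := by simpa using hcoeff 0
  have hRi : ∀ i, 0 < i → R.coeff i = 0 := by
    intro i hi
    have h0 : (R.coeff i).comp g = 0 := by
      rw [hcoeff i, coeff_C, if_neg hi.ne']
    rcases comp_eq_zero_iff.mp h0 with h1 | ⟨_, h1⟩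
    · exact h1
    · exfalso; have := natDegree_C (g.coeff 0); rw [← h1] at this; omega
  have hRC : R = C (R.coeff 0) := by
    ext i
    rcases Nat.eq_zero_or_pos i with rfl | hi
    · simp
    · rw [hRi i hi, coeff_C, if_neg hi.ne']
  -- substitute t := f, X := x
  refine ⟨R.coeff 0, ?_, hTg⟩
  set τ : K[X] →+* K[X] := eval₂RingHom (C : K →+* K[X]) f with hτ
  set χ : Polynomial (K[X]) →+* K[X] := eval₂RingHom τ X with hχ
  have hχmapC : ∀ p : K[X], χ (p.map (C : K →+* K[X])) = p := by
    intro p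
    rw [hχ, coe_eval₂RingHom, eval₂_map]
    have hτC : (τ.comp (C : K →+* K[X])) = (C : K →+* K[X]) := by ext k; simp [hτ]
    rw [hτC]
    exact aeval_X_left_apply p
  have hχΦ : χ Φ = 0 := by
    rw [hΦ, map_sub, hχmapC, hχ, coe_eval₂RingHom, eval₂_C]
    simp [hτ, comp]
  have hfin := congrArg χ hdiv
  rw [hχmapC, map_add, map_mul, hχΦ, zero_mul, zero_add, hRC] at hfin
  rw [hfin, hχ, coe_eval₂RingHom, eval₂_C, hτ, coe_eval₂RingHom]
  simp [comp]

end FM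

open Polynomial MvPolynomial

theorem stmt_10 {K : Type*} [Field K]
    (f g a b : Polynomial K)
    (hf : 0 < f.natDegree) (hg : 0 < g.natDegree)
    (ha : 0 < a.natDegree) (hb : 0 < b.natDegree) :
    ((Polynomial.aeval (MvPolynomial.X 0) f - Polynomial.aeval (MvPolynomial.X 1) g
        : MvPolynomial (Fin 2) K) ∣
      (Polynomial.aeval (MvPolynomial.X 0) a - Polynomial.aeval (MvPolynomial.X 1) b
        : MvPolynomial (Fin 2) K)) ↔
    ∃ T : Polynomial K, T.comp f = a ∧ T.comp g = b := by
  constructor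
  · intro h
    -- transfer to Polynomial (Polynomial K)
    set φ : MvPolynomial (Fin 2) K →ₐ[K] Polynomial (Polynomial K) :=
      MvPolynomial.aeval ![Polynomial.X, Polynomial.C Polynomial.X] with hφ
    have key1 : ∀ p : K[X], φ (Polynomial.aeval (MvPolynomial.X 0) p)
        = p.map (Polynomial.C : K →+* K[X]) := by
      intro p
      rw [← Polynomial.aeval_algHom_apply]
      have h0 : φ (MvPolynomial.X 0) = Polynomial.X := by simp [hφ]
      rw [h0, ← Polynomial.aeval_map_algebraMap (R := K) (A := Polynomial K)
        (B := Polynomial (Polynomial K)) Polynomial.X p, Polynomial.aeval_X_left_apply,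
        Polynomial.algebraMap_eq]
    have key2 : ∀ p : K[X], φ (Polynomial.aeval (MvPolynomial.X 1) p)
        = Polynomial.C p := by
      intro p
      rw [← Polynomial.aeval_algHom_apply]
      have h0 : φ (MvPolynomial.X 1) = Polynomial.C Polynomial.X := by simp [hφ]
      rw [h0]
      have h1 := Polynomial.aeval_algHom_apply
        (Polynomial.CAlgHom (R := K) (A := Polynomial K)) Polynomial.X p
      rw [Polynomial.CAlgHom_apply] at h1
      rw [h1, Polynomial.CAlgHom_apply, Polynomial.aeval_X_left_apply]
    have h' := map_dvd φ h
    rw [map_sub, map_sub, key1 f, key1 a, key2 g, key2 b] at h'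
    exact fm_key f g a b hf hg h'
  · rintro ⟨T, hTf, hTg⟩
    rw [← hTf, ← hTg, Polynomial.aeval_comp, Polynomial.aeval_comp]
    have e : ∀ x : MvPolynomial (Fin 2) K, Polynomial.aeval x T
        = (T.map (algebraMap K _)).eval x := fun x => by
      rw [Polynomial.aeval_def, Polynomial.eval_map]
    rw [e, e]
    exact Polynomial.sub_dvd_eval_sub _ _ _
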